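/- For real constants C and functions F_C(x) := x ln x − C x defined for x > 0, the inverse function F_C^{-1} satisfies the asymptotic expansion F_C^{-1}(y) = y/ln y + y·ln(ln y)/(ln y)² + C y/(ln y)² + o(y/(ln y)²) as y → ∞. -/

import Mathlib

open Filter Asymptotics

private lemma tendsto_log_div' : Tendsto (fun x : ℝ => Real.log x / x) atTop (nhds 0) := by
  simpa using Real.tendsto_pow_log_div_mul_add_atTop 1 0 1 one_ne_zero

private lemma tendsto_sq_log_div' : Tendsto (fun x : ℝ => (Real.log x) ^ 2 / x) atTop (nhds 0) := by
  simpa using Real.tendsto_pow_log_div_mul_add_atTop 1 0 2 one_ne_zero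

private lemma key (C : ℝ) :
    Tendsto (fun u : ℝ =>
      (u + Real.log (u - C)) ^ 2 / (u - C) - (u + Real.log (u - C))
        - Real.log (u + Real.log (u - C)) - C) atTop (nhds 0) := by
  have h_uc : Tendsto (fun u : ℝ => u - C) atTop atTop := tendsto_atTop_add_const_right _ (-C) tendsto_id
  have h_v : Tendsto (fun u : ℝ => Real.log (u - C)) atTop atTop := Real.tendsto_log_atTop.comp h_uc
  have h_w : Tendsto (fun u : ℝ => u + Real.log (u - C)) atTop atTop := Tendsto.atTop_add_atTop tendsto_id h_v
  have h_vdiv : Tendsto (fun u : ℝ => Real.log (u - C) / (u - C)) atTop (nhds 0) :=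
    tendsto_log_div'.comp h_uc
  have h_v2div : Tendsto (fun u : ℝ => (Real.log (u - C)) ^ 2 / (u - C)) atTop (nhds 0) :=
    tendsto_sq_log_div'.comp h_uc
  have h_cdiv : Tendsto (fun u : ℝ => C / (u - C)) atTop (nhds 0) :=
    tendsto_const_nhds.div_atTop h_uc
  have h_t : Tendsto (fun u : ℝ => (Real.log (u - C) + C) / (u - C)) atTop (nhds 0) := by
    have := h_vdiv.add h_cdiv
    simpa [add_div] using this
  have h_ne : ∀ᶠ u : ℝ in atTop, (1:ℝ) ≤ u - C := h_uc.eventually_ge_atTop 1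
  have h_ratio : Tendsto (fun u : ℝ => u / (u - C)) atTop (nhds 1) := by
    have h1 : Tendsto (fun u : ℝ => 1 + C / (u - C)) atTop (nhds (1 + 0)) :=
      tendsto_const_nhds.add h_cdiv
    rw [add_zero] at h1
    refine h1.congr' ?_
    filter_upwards [h_ne] with u hu
    have : u - C ≠ 0 := by linarith
    field_simp
    ring
  have h_wr : Tendsto (fun u : ℝ => (u + Real.log (u - C)) / (u - C)) atTop (nhds 1) := by
    have := h_ratio.add h_vdiv
    rw [add_zero] at this
    simpa [add_div] using this
  have h_M : Tendsto (fun u : ℝ => Real.log (u + Real.log (u - C)) / (u - C)) atTop (nhds 0) := by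
    have h1 : Tendsto (fun u : ℝ =>
        (Real.log (u + Real.log (u - C)) / (u + Real.log (u - C)))
          * ((u + Real.log (u - C)) / (u - C))) atTop (nhds (0 * 1)) :=
      (tendsto_log_div'.comp h_w).mul h_wr
    rw [zero_mul] at h1
    refine h1.congr' ?_
    filter_upwards [h_w.eventually_gt_atTop 0] with u hu
    rw [div_mul_div_comm, mul_comm (u + Real.log (u - C)), ← div_mul_div_comm,
      div_self hu.ne', mul_one]
  have h_log1t : Tendsto (fun u : ℝ =>
      Real.log (1 + (Real.log (u - C) + C) / (u - C))) atTop (nhds 0) := by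
    have h1 : Tendsto (fun u : ℝ => 1 + (Real.log (u - C) + C) / (u - C)) atTop (nhds (1 + 0)) :=
      tendsto_const_nhds.add h_t
    rw [add_zero] at h1
    have := ((Real.continuousAt_log one_ne_zero).tendsto).comp h1
    simpa using (by exact this : Tendsto (fun u : ℝ => Real.log (1 + (Real.log (u - C) + C) / (u - C))) atTop (nhds (Real.log 1)))
  have hE : Tendsto (fun u : ℝ =>
      -(u / (u - C) * Real.log (1 + (Real.log (u - C) + C) / (u - C)))
        + ((Real.log (u - C)) ^ 2 / (u - C) + C * (Real.log (u - C) / (u - C))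
          + C * (Real.log (u + Real.log (u - C)) / (u - C)) + C * (C / (u - C))))
      atTop (nhds (-(1 * 0) + (0 + C * 0 + C * 0 + C * 0))) :=
    ((h_ratio.mul h_log1t).neg).add
      (((h_v2div.add (h_vdiv.const_mul C)).add (h_M.const_mul C)).add (h_cdiv.const_mul C))
  norm_num at hE
  refine hE.congr' ?_
  filter_upwards [h_ne, eventually_ge_atTop 1] with u hu hu1
  have hucpos : (0:ℝ) < u - C := by linarith
  have hv0 : 0 ≤ Real.log (u - C) := Real.log_nonneg hu
  have hw0 : (0:ℝ) < u + Real.log (u - C) := by linarith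
  have h1t : 1 + (Real.log (u - C) + C) / (u - C) = (u + Real.log (u - C)) / (u - C) := by
    field_simp
    ring
  have hld : Real.log ((u + Real.log (u - C)) / (u - C))
      = Real.log (u + Real.log (u - C)) - Real.log (u - C) :=
    Real.log_div hw0.ne' hucpos.ne'
  rw [h1t, hld]
  field_simp
  ring

/-- Asymptotic expansion of the inverse of `F_C(x) = x ln x − C x`:
if `g` is an inverse of `F_C` near `+∞` (i.e. `g → ∞` and `F_C (g y) = y` eventually), then
`g(y) = y/ln y + y ln(ln y)/(ln y)² + C y/(ln y)² + o(y/(ln y)²)` as `y → ∞`. -/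
theorem inverse_xlogx_asymptotics (C : ℝ) (g : ℝ → ℝ)
    (hg : Tendsto g atTop atTop)
    (hinv : ∀ᶠ y in atTop, g y * Real.log (g y) - C * g y = y) :
    (fun y => g y - (y / Real.log y + y * Real.log (Real.log y) / (Real.log y) ^ 2
        + C * y / (Real.log y) ^ 2))
      =o[atTop] fun y => y / (Real.log y) ^ 2 := by
  rw [isLittleO_iff_tendsto']
  · have hcomp : Tendsto (fun y =>
        (Real.log (g y) + Real.log (Real.log (g y) - C)) ^ 2 / (Real.log (g y) - C)
          - (Real.log (g y) + Real.log (Real.log (g y) - C))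
          - Real.log (Real.log (g y) + Real.log (Real.log (g y) - C)) - C)
        atTop (nhds 0) := (key C).comp (Real.tendsto_log_atTop.comp hg)
    refine hcomp.congr' ?_
    filter_upwards [hinv, hg.eventually (eventually_ge_atTop (Real.exp (|C| + 2))),
      eventually_ge_atTop 2] with y hy hx hy2
    set x := g y with hxdef
    have hx0 : (0:ℝ) < x := lt_of_lt_of_le (Real.exp_pos _) hx
    have hu : |C| + 2 ≤ Real.log x := by
      calc |C| + 2 = Real.log (Real.exp (|C| + 2)) := (Real.log_exp _).symm
        _ ≤ Real.log x := Real.log_le_log (Real.exp_pos _) hx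
    set u := Real.log x with hudef
    have huC : (2:ℝ) ≤ u - C := by
      have := le_abs_self C
      linarith
    have hucpos : (0:ℝ) < u - C := by linarith
    have hv0 : (0:ℝ) ≤ Real.log (u - C) := Real.log_nonneg (by linarith)
    have hu0 : (0:ℝ) < u := by
      have := abs_nonneg C
      linarith
    set v := Real.log (u - C) with hvdef
    have hyx : y = x * (u - C) := by rw [← hy]; ring
    have hlogy : Real.log y = u + v := by
      rw [hyx, Real.log_mul hx0.ne' hucpos.ne']
    have hw0 : (0:ℝ) < u + v := by linarith
    have hy0 : (0:ℝ) < y := by linarith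
    rw [hlogy, hyx]
    field_simp
    ring
  · filter_upwards [eventually_ge_atTop 2] with y hy h
    exfalso
    have hly : (0:ℝ) < Real.log y := Real.log_pos (by linarith)
    have : (0:ℝ) < y / (Real.log y) ^ 2 := div_pos (by linarith) (pow_pos hly 2)
    rw [h] at this
    exact lt_irrefl 0 this
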